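/- Let K be a commutative ring, S = K[x_1,…,x_n], and φ: S → S a flat K-algebra homomorphism with φ(x_i) = s_i·x_i for elements s_i ∈ S. There is a short exact sequence of chain complexes of left S[Θ;φ]-modules 0 → S[Θ;φ] ⊗_S K_•(S; x_1,…,x_n) → FK_•(x_1,…,x_n) → (S[Θ;φ] ⊗_S K_•(S; φ(x_1),…,φ(x_n)))[1] → 0, where K_•(S; f_1,…,f_n) denotes the Koszul chain complex of S on f_1,…,f_n, the tensor products use the right S-module structure of S[Θ;φ], and [1] denotes the shift of the chain complex by one degree. -/

import Mathlib

structure LeftSkewPolynomialRing (A : Type*) [CommRing A] (φ : A →+* A)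
    (B : Type*) [Ring B] where
  ι : A →+* B
  θ : B
  theta_mul : ∀ a : A, θ * ι a = ι (φ a) * θ
  basis : Function.Bijective fun f : ℕ →₀ A => f.sum fun i a => ι a * θ ^ i

noncomputable section

namespace PhiKoszulZ

variable {S : Type*} [CommRing S] {φ : S →+* S} {B : Type*} [Ring B] {n : ℕ}

/-- The left `B`-linear map `B → N` sending `b` to `b • v`. -/
def toSpan {N : Type*} [AddCommGroup N] [Module B N] (v : N) : B →ₗ[B] N where
  toFun b := b • v
  map_add' a b := add_smul a b v
  map_smul' a b := mul_smul a b v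

/-- Extension of a family `s : Fin n → S` to `Fin (n+1)`, with value `1` at the last
index (which corresponds to the extra basis vector `u`). -/
def extOne (s : Fin n → S) (j : Fin (n + 1)) : S :=
  if h : (j : ℕ) < n then s ⟨j, h⟩ else 1

/-- The degree-`l` term `FK_l` of the `φ`-Koszul complex (indexed over `ℤ`): the free
left `S[Θ;φ]`-module on the `l`-element subsets of `{e_1, …, e_n, u}` (where `u`
corresponds to the last element of `Fin (n+1)`); it vanishes for `l < 0` and
`l > n + 1`. -/
abbrev FK (B : Type*) [Ring B] (n : ℕ) (l : ℤ) : Type _ :=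
  {t : Finset (Fin (n + 1)) // (t.card : ℤ) = l} →₀ B

/-- The degree-`l` term of the base-changed Koszul complex `S[Θ;φ] ⊗_S K_•(S; f)`
(indexed over `ℤ`): the free left `S[Θ;φ]`-module on the `l`-element subsets of
`{e_1, …, e_n}`. -/
abbrev BK (B : Type*) [Ring B] (n : ℕ) (l : ℤ) : Type _ :=
  {t : Finset (Fin n) // (t.card : ℤ) = l} →₀ B

/-- Coefficients of the `φ`-Koszul differential. -/
def coeff (sk : LeftSkewPolynomialRing S φ B) (x s : Fin n → S)
    (T : Finset (Fin (n + 1))) (i : Fin (n + 1)) : B :=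
  if h : (i : ℕ) < n then
    (if Fin.last n ∈ T then sk.ι (φ (x ⟨i, h⟩)) else sk.ι (x ⟨i, h⟩))
  else sk.θ - sk.ι (∏ j ∈ T.erase (Fin.last n), extOne s j)

/-- Image of the basis element `T` under the `φ`-Koszul differential. -/
def tgt (sk : LeftSkewPolynomialRing S φ B) (x s : Fin n → S) (l : ℤ)
    (T : {t : Finset (Fin (n + 1)) // (t.card : ℤ) = l}) : FK B n (l - 1) :=
  ∑ i ∈ T.1.attach,
    ((-1 : ℤ) ^ (T.1.filter fun j => j < i.1).card) •
      Finsupp.single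
        ⟨T.1.erase i.1, by
          have h1 : 1 ≤ T.1.card := Finset.card_pos.mpr ⟨i.1, i.2⟩
          rw [Finset.card_erase_of_mem i.2, Nat.cast_sub h1, T.2, Nat.cast_one]⟩
        (coeff sk x s T.1 i.1)

/-- The `φ`-Koszul differential `∂_l : FK_l → FK_{l-1}`. -/
def FKd (sk : LeftSkewPolynomialRing S φ B) (x s : Fin n → S) (l : ℤ) :
    FK B n l →ₗ[B] FK B n (l - 1) :=
  Finsupp.lsum ℕ fun T => toSpan (tgt sk x s l T)

/-- Image of the basis element `T` under the base-changed Koszul differential of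
`S[Θ;φ] ⊗_S K_•(S; f)`. -/
def ktgt (sk : LeftSkewPolynomialRing S φ B) (f : Fin n → S) (l : ℤ)
    (T : {t : Finset (Fin n) // (t.card : ℤ) = l}) : BK B n (l - 1) :=
  ∑ i ∈ T.1.attach,
    ((-1 : ℤ) ^ (T.1.filter fun j => j < i.1).card) •
      Finsupp.single
        ⟨T.1.erase i.1, by
          have h1 : 1 ≤ T.1.card := Finset.card_pos.mpr ⟨i.1, i.2⟩
          rw [Finset.card_erase_of_mem i.2, Nat.cast_sub h1, T.2, Nat.cast_one]⟩
        (sk.ι (f i.1))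

/-- The differential of the base-changed Koszul complex `S[Θ;φ] ⊗_S K_•(S; f)`. -/
def BKd (sk : LeftSkewPolynomialRing S φ B) (f : Fin n → S) (l : ℤ) :
    BK B n l →ₗ[B] BK B n (l - 1) :=
  Finsupp.lsum ℕ fun T => toSpan (ktgt sk f l T)

/-- The inclusion of index sets: an `l`-element subset of `{e_1,…,e_n}` is an
`l`-element subset of `{e_1,…,e_n,u}`. -/
def up (n : ℕ) (l : ℤ) (T : {t : Finset (Fin n) // (t.card : ℤ) = l}) :
    {t : Finset (Fin (n + 1)) // (t.card : ℤ) = l} :=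
  ⟨T.1.map Fin.castSuccEmb, by rw [Finset.card_map]; exact T.2⟩

/-- The degreewise inclusion `S[Θ;φ] ⊗_S K_l(S; x) → FK_l` (a wedge of `e`'s is a
wedge of `e`'s). -/
def inj (n : ℕ) (l : ℤ) : BK B n l →ₗ[B] FK B n l :=
  Finsupp.lmapDomain B B (up n l)

/-- Adjoining `u` to an `(l-1)`-element subset of `{e_1,…,e_n}` gives an `l`-element
subset of `{e_1,…,e_n,u}`. -/
def lift (n : ℕ) (l : ℤ) (T : {t : Finset (Fin n) // (t.card : ℤ) = l - 1}) :
    {t : Finset (Fin (n + 1)) // (t.card : ℤ) = l} :=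
  ⟨insert (Fin.last n) (T.1.map Fin.castSuccEmb), by
    have hnot : Fin.last n ∉ T.1.map Fin.castSuccEmb := by
      simp only [Finset.mem_map]
      rintro ⟨i, -, hi⟩
      exact absurd hi (Fin.castSucc_lt_last i).ne
    rw [Finset.card_insert_of_notMem hnot, Finset.card_map, Nat.cast_add,
      Nat.cast_one, T.2]
    ring⟩

lemma lift_injective (n : ℕ) (l : ℤ) : Function.Injective (lift n l) := by
  intro T1 T2 h
  have hnot : ∀ T : {t : Finset (Fin n) // (t.card : ℤ) = l - 1},
      Fin.last n ∉ T.1.map Fin.castSuccEmb := by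
    intro T
    simp only [Finset.mem_map]
    rintro ⟨i, -, hi⟩
    exact absurd hi (Fin.castSucc_lt_last i).ne
  have h' := congrArg (fun t => Finset.erase t.1 (Fin.last n)) h
  simp only [lift, Finset.erase_insert (hnot T1), Finset.erase_insert (hnot T2)] at h'
  exact Subtype.ext (Finset.map_injective Fin.castSuccEmb h')

/-- The degreewise projection `FK_l → (S[Θ;φ] ⊗_S K_•(S; φ(x))[1])_l = S[Θ;φ] ⊗_S
K_{l-1}(S; φ(x))` (a wedge `e_J ∧ u` is sent to `e_J`; wedges without `u` are sent
to `0`). -/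
def proj (n : ℕ) (l : ℤ) : FK B n l →ₗ[B] BK B n (l - 1) :=
  Finsupp.lcomapDomain (lift n l) (lift_injective n l)

end PhiKoszulZ

end
noncomputable section
namespace PhiKoszulZ

variable {S : Type*} [CommRing S] {φ : S →+* S} {B : Type*} [Ring B] {n : ℕ}

lemma last_not_mem_map (t : Finset (Fin n)) :
    Fin.last n ∉ t.map Fin.castSuccEmb := by
  simp only [Finset.mem_map]
  rintro ⟨i, -, hi⟩
  exact absurd hi (Fin.castSucc_lt_last i).ne

lemma up_injective (n : ℕ) (l : ℤ) : Function.Injective (up n l) := by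
  intro T1 T2 h
  exact Subtype.ext (Finset.map_injective Fin.castSuccEmb (congrArg Subtype.val h))

/-- The set of indices `j` with `castSucc j ∈ T`. -/
def downSet (T : Finset (Fin (n + 1))) : Finset (Fin n) :=
  Finset.univ.filter fun j => Fin.castSucc j ∈ T

lemma map_downSet (T : Finset (Fin (n + 1))) :
    (downSet T).map Fin.castSuccEmb = T.erase (Fin.last n) := by
  ext i
  simp only [Finset.mem_map, downSet, Finset.mem_filter, Finset.mem_univ, true_and,
    Finset.mem_erase, Fin.coe_castSuccEmb]
  constructor
  · rintro ⟨j, hj, rfl⟩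
    exact ⟨(Fin.castSucc_lt_last j).ne, hj⟩
  · rintro ⟨hne, hi⟩
    obtain ⟨j, rfl⟩ := Fin.exists_castSucc_eq.mpr hne
    exact ⟨j, hi, rfl⟩

lemma exists_lift_eq {l : ℤ} (T : {t : Finset (Fin (n + 1)) // (t.card : ℤ) = l})
    (hT : Fin.last n ∈ T.1) : ∃ U, lift n l U = T := by
  have hcard : ((downSet T.1).card : ℤ) = l - 1 := by
    have h1 : 1 ≤ T.1.card := Finset.card_pos.mpr ⟨_, hT⟩
    have : (downSet T.1).card = T.1.card - 1 := by
      rw [← Finset.card_map Fin.castSuccEmb, map_downSet, Finset.card_erase_of_mem hT]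
    rw [this, Nat.cast_sub h1, T.2, Nat.cast_one]
  refine ⟨⟨downSet T.1, hcard⟩, Subtype.ext ?_⟩
  show insert (Fin.last n) ((downSet T.1).map Fin.castSuccEmb) = T.1
  rw [map_downSet, Finset.insert_erase hT]

lemma exists_up_eq {l : ℤ} (T : {t : Finset (Fin (n + 1)) // (t.card : ℤ) = l})
    (hT : Fin.last n ∉ T.1) : ∃ U, up n l U = T := by
  have hmap : (downSet T.1).map Fin.castSuccEmb = T.1 := by
    rw [map_downSet, Finset.erase_eq_of_notMem hT]
  have hcard : ((downSet T.1).card : ℤ) = l := by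
    rw [← Finset.card_map Fin.castSuccEmb, hmap, T.2]
  exact ⟨⟨downSet T.1, hcard⟩, Subtype.ext hmap⟩

lemma inj_single {l : ℤ} (T : {t : Finset (Fin n) // (t.card : ℤ) = l}) (b : B) :
    inj n l (Finsupp.single T b) = Finsupp.single (up n l T) b := by
  simp [inj, Finsupp.lmapDomain_apply, Finsupp.mapDomain_single]

lemma proj_single_lift {l : ℤ} (U : {t : Finset (Fin n) // (t.card : ℤ) = l - 1}) (b : B) :
    proj n l (Finsupp.single (lift n l U) b) = Finsupp.single U b :=
  Finsupp.comapDomain_single (lift n l) U b _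

lemma proj_single_of_not_mem {l : ℤ} (T : {t : Finset (Fin (n + 1)) // (t.card : ℤ) = l})
    (hT : Fin.last n ∉ T.1) (b : B) : proj n l (Finsupp.single T b) = 0 := by
  ext U
  show (Finsupp.single T b) (lift n l U) = 0
  refine Finsupp.single_eq_of_ne fun h => hT ?_
  have : Fin.last n ∈ (lift n l U).1 := Finset.mem_insert_self _ _
  exact h ▸ this

end PhiKoszulZ
end
noncomputable section
namespace PhiKoszulZ
variable {S : Type*} [CommRing S] {φ : S →+* S} {B : Type*} [Ring B] {n : ℕ}
variable (sk : LeftSkewPolynomialRing S φ B) (x s : Fin n → S)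

lemma key1 (l : ℤ) (T : {t : Finset (Fin n) // (t.card : ℤ) = l}) :
    inj n (l - 1) (ktgt sk x l T) = tgt sk x s l (up n l T) := by
  rw [ktgt, map_sum, tgt]
  refine Finset.sum_bij
    (fun i _ => (⟨Fin.castSuccEmb i.1, Finset.mem_map_of_mem _ i.2⟩ :
      {a // a ∈ (up n l T).1}))
    (fun a ha => Finset.mem_attach _ _) ?_ ?_ ?_
  · intro a1 _ a2 _ h
    exact Subtype.ext (Fin.castSuccEmb.injective (congrArg Subtype.val h))
  · rintro ⟨b, hb⟩ -
    obtain ⟨j, hj, rfl⟩ := Finset.mem_map.mp hb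
    exact ⟨⟨j, hj⟩, Finset.mem_attach _ _, rfl⟩
  · intro a _
    rw [map_zsmul, inj_single]
    simp only
    have hlt : ((Fin.castSuccEmb a.1 : Fin (n + 1)) : ℕ) < n := a.1.isLt
    have hcoeff : coeff sk x s (up n l T).1 (Fin.castSuccEmb a.1) = sk.ι (x a.1) := by
      simp only [coeff]
      rw [dif_pos hlt, if_neg (show Fin.last n ∉ (up n l T).1 from last_not_mem_map _)]
      exact congrArg sk.ι (congrArg x (Fin.ext rfl))
    rw [hcoeff]
    have hsign : (Finset.filter (fun j => j < Fin.castSuccEmb a.1) (up n l T).1).card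
        = (Finset.filter (fun j => j < a.1) T.1).card := by
      show ((T.1.map Fin.castSuccEmb).filter _).card = _
      rw [Finset.filter_map, Finset.card_map]
      exact congrArg Finset.card (Finset.filter_congr fun b _ =>
        Fin.castSucc_lt_castSucc_iff)
    rw [hsign]
    congr 1
    congr 1
    exact Subtype.ext (Finset.map_erase _ _ _)

end PhiKoszulZ
end
noncomputable section
namespace PhiKoszulZ
variable {S : Type*} [CommRing S] {φ : S →+* S} {B : Type*} [Ring B] {n : ℕ}
variable (sk : LeftSkewPolynomialRing S φ B) (x s : Fin n → S)

lemma key2 (l : ℤ) (U : {t : Finset (Fin n) // (t.card : ℤ) = l - 1}) :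
    proj n (l - 1) (tgt sk x s l (lift n l U)) = ktgt sk (fun i => φ (x i)) (l - 1) U := by
  rw [tgt, map_sum]
  have h0 : ∑ i ∈ (lift n l U).1.attach.filter (fun i => i.1 = Fin.last n),
      proj n (l - 1) (((-1 : ℤ) ^ ((lift n l U).1.filter fun j => j < i.1).card) •
        Finsupp.single ⟨(lift n l U).1.erase i.1, by
          have h1 : 1 ≤ (lift n l U).1.card := Finset.card_pos.mpr ⟨i.1, i.2⟩
          rw [Finset.card_erase_of_mem i.2, Nat.cast_sub h1, (lift n l U).2, Nat.cast_one]⟩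
          (coeff sk x s (lift n l U).1 i.1)) = 0 := by
    refine Finset.sum_eq_zero fun i hi => ?_
    have hival : i.1 = Fin.last n := (Finset.mem_filter.mp hi).2
    rw [map_zsmul, proj_single_of_not_mem, smul_zero]
    show Fin.last n ∉ (lift n l U).1.erase i.1
    rw [hival]
    exact Finset.notMem_erase _ _
  rw [← Finset.sum_filter_add_sum_filter_not
    ((lift n l U).1.attach) (fun i => i.1 = Fin.last n), h0, zero_add, ktgt]
  refine (Finset.sum_bij (fun j _ => (⟨Fin.castSuccEmb j.1,
      Finset.mem_insert_of_mem (Finset.mem_map_of_mem _ j.2)⟩ :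
        {a // a ∈ (lift n l U).1})) ?_ ?_ ?_ ?_).symm
  · intro j _
    refine Finset.mem_filter.mpr ⟨Finset.mem_attach _ _, ?_⟩
    exact (Fin.castSucc_lt_last j.1).ne
  · intro a1 _ a2 _ h
    exact Subtype.ext (Fin.castSuccEmb.injective (congrArg Subtype.val h))
  · rintro ⟨b, hb⟩ hbf
    have hbne : b ≠ Fin.last n := (Finset.mem_filter.mp hbf).2
    have hb' : b ∈ U.1.map Fin.castSuccEmb := by
      rcases Finset.mem_insert.mp hb with h | h
      · exact absurd h hbne
      · exact h
    obtain ⟨j, hj, rfl⟩ := Finset.mem_map.mp hb'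
    exact ⟨⟨j, hj⟩, Finset.mem_attach _ _, rfl⟩
  · intro j _
    simp only
    have hlt : ((Fin.castSuccEmb j.1 : Fin (n + 1)) : ℕ) < n := j.1.isLt
    have hcoeff : coeff sk x s (lift n l U).1 (Fin.castSuccEmb j.1) = sk.ι (φ (x j.1)) := by
      simp only [coeff]
      rw [dif_pos hlt, if_pos (show Fin.last n ∈ (lift n l U).1 from Finset.mem_insert_self _ _)]
      exact congrArg (fun a : Fin n => sk.ι (φ (x a))) (Fin.ext rfl)
    have hsign : (Finset.filter (fun a => a < Fin.castSuccEmb j.1) (lift n l U).1).card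
        = (Finset.filter (fun a => a < j.1) U.1).card := by
      show (Finset.filter _ (insert (Fin.last n) (U.1.map Fin.castSuccEmb))).card = _
      rw [Finset.filter_insert, if_neg (show ¬ Fin.last n < Fin.castSuccEmb j.1 from (Fin.castSucc_lt_last j.1).asymm),
        Finset.filter_map, Finset.card_map]
      exact congrArg Finset.card (Finset.filter_congr fun b _ =>
        Fin.castSucc_lt_castSucc_iff)
    have hidx : ∀ (p1 : (((lift n l U).1.erase (Fin.castSuccEmb j.1)).card : ℤ) = l - 1)
        (p2 : ((U.1.erase j.1).card : ℤ) = l - 1 - 1),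
        (⟨(lift n l U).1.erase (Fin.castSuccEmb j.1), p1⟩ :
          {t : Finset (Fin (n + 1)) // (t.card : ℤ) = l - 1}) =
          lift n (l - 1) ⟨U.1.erase j.1, p2⟩ := by
      intro p1 p2
      refine Subtype.ext ?_
      show (insert (Fin.last n) (U.1.map Fin.castSuccEmb)).erase (Fin.castSuccEmb j.1)
        = insert (Fin.last n) ((U.1.erase j.1).map Fin.castSuccEmb)
      rw [Finset.map_erase]
      exact Finset.erase_insert_of_ne (Fin.castSucc_lt_last j.1).ne'
    have p2 : ((U.1.erase j.1).card : ℤ) = l - 1 - 1 := by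
      have h1 : 1 ≤ U.1.card := Finset.card_pos.mpr ⟨j.1, j.2⟩
      rw [Finset.card_erase_of_mem j.2, Nat.cast_sub h1, U.2, Nat.cast_one]
    rw [map_zsmul, hcoeff, hidx _ p2, proj_single_lift, hsign]
end PhiKoszulZ
end
noncomputable section
namespace PhiKoszulZ
variable {S : Type*} [CommRing S] {φ : S →+* S} {B : Type*} [Ring B] {n : ℕ}
variable (sk : LeftSkewPolynomialRing S φ B) (x s : Fin n → S)

lemma inj_injective (l : ℤ) : Function.Injective (inj (B := B) n l) := fun a b h =>
  Finsupp.mapDomain_injective (up_injective n l) h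

lemma proj_comp_section (l : ℤ) :
    (proj (B := B) n l).comp (Finsupp.lmapDomain B B (lift n l)) = LinearMap.id := by
  refine Finsupp.lhom_ext fun a b => ?_
  rw [LinearMap.comp_apply, Finsupp.lmapDomain_apply, Finsupp.mapDomain_single,
    proj_single_lift, LinearMap.id_apply]

lemma proj_surjective (l : ℤ) : Function.Surjective (proj (B := B) n l) := fun g =>
  ⟨Finsupp.lmapDomain B B (lift n l) g, by
    rw [← LinearMap.comp_apply, proj_comp_section, LinearMap.id_apply]⟩

lemma proj_comp_inj (l : ℤ) : (proj (B := B) n l).comp (inj n l) = 0 := by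
  refine Finsupp.lhom_ext fun a b => ?_
  rw [LinearMap.comp_apply, inj_single, proj_single_of_not_mem _ (last_not_mem_map _),
    LinearMap.zero_apply]

lemma inj_proj_exact (l : ℤ) :
    Function.Exact (inj (B := B) n l) (proj (B := B) n l) := by
  intro y
  constructor
  · intro hy
    refine ⟨Finsupp.comapDomain (up n l) y (up_injective n l).injOn, ?_⟩
    rw [inj, Finsupp.lmapDomain_apply]
    refine Finsupp.mapDomain_comapDomain _ (up_injective n l) y fun T hT => ?_
    have hT' : T ∈ y.support := hT
    by_cases h : Fin.last n ∈ T.1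
    · obtain ⟨U, rfl⟩ := exists_lift_eq T h
      have h0 : y (lift n l U) = 0 := by
        have := congrArg (fun g => g U) hy
        simpa [proj, Finsupp.lcomapDomain, Finsupp.comapDomain_apply] using this
      exact absurd h0 (Finsupp.mem_support_iff.mp hT')
    · exact exists_up_eq T h
  · rintro ⟨a, rfl⟩
    rw [← LinearMap.comp_apply, proj_comp_inj, LinearMap.zero_apply]

lemma comm_inj (l : ℤ) :
    (inj n (l - 1)).comp (BKd sk x l) = (FKd sk x s l).comp (inj n l) := by
  refine Finsupp.lhom_ext fun T b => ?_
  rw [LinearMap.comp_apply, LinearMap.comp_apply, inj_single, BKd, FKd,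
    Finsupp.lsum_single, Finsupp.lsum_single]
  show inj n (l - 1) (b • ktgt sk x l T) = b • tgt sk x s l (up n l T)
  rw [map_smul, key1 sk x s l T]

lemma comm_proj (l : ℤ) :
    (proj n (l - 1)).comp (FKd sk x s l) =
      (BKd sk (fun i => φ (x i)) (l - 1)).comp (proj n l) := by
  refine Finsupp.lhom_ext fun T b => ?_
  rw [LinearMap.comp_apply, LinearMap.comp_apply, FKd, Finsupp.lsum_single]
  by_cases h : Fin.last n ∈ T.1
  · obtain ⟨U, rfl⟩ := exists_lift_eq T h
    rw [proj_single_lift, BKd, Finsupp.lsum_single]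
    show proj n (l - 1) (b • tgt sk x s l (lift n l U)) =
      b • ktgt sk (fun i => φ (x i)) (l - 1) U
    rw [map_smul, key2]
  · rw [proj_single_of_not_mem T h, map_zero]
    show proj n (l - 1) (b • tgt sk x s l T) = 0
    rw [map_smul]
    have h0 : proj n (l - 1) (tgt sk x s l T) = 0 := by
      rw [tgt, map_sum]
      refine Finset.sum_eq_zero fun i _ => ?_
      rw [map_zsmul,
        proj_single_of_not_mem _ (fun hmem => h (Finset.mem_of_mem_erase hmem)),
        smul_zero]
    rw [h0, smul_zero]

end PhiKoszulZ
end

open PhiKoszulZ MvPolynomial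

/-- Let `K` be a commutative ring, `S = K[x_1,…,x_n]`, and `φ : S → S` a flat
`K`-algebra homomorphism with `φ(x_i) = s_i·x_i`.  There is a short exact sequence of
chain complexes of left `S[Θ;φ]`-modules
`0 → S[Θ;φ] ⊗_S K_•(S; x) → FK_•(x) → (S[Θ;φ] ⊗_S K_•(S; φ(x)))[1] → 0` :
in each degree `l` the canonical inclusion and projection are injective resp. surjective
and exact, and they commute with the differentials. -/
theorem phiKoszul_short_exact_sequence
    {K : Type*} [CommRing K] {n : ℕ}
    (φ : MvPolynomial (Fin n) K →ₐ[K] MvPolynomial (Fin n) K)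
    (hflat : (φ : MvPolynomial (Fin n) K →+* MvPolynomial (Fin n) K).Flat)
    (s : Fin n → MvPolynomial (Fin n) K)
    (hs : ∀ i, φ (X i) = s i * X i)
    {B : Type*} [Ring B]
    (sk : LeftSkewPolynomialRing (MvPolynomial (Fin n) K)
      (φ : MvPolynomial (Fin n) K →+* MvPolynomial (Fin n) K) B) :
    ∀ l : ℤ,
      -- `0 → (S[Θ;φ] ⊗ K_•(x))_l → FK_l → ((S[Θ;φ] ⊗ K_•(φ x))[1])_l → 0` is exact:
      Function.Injective (inj (B := B) n l) ∧
      Function.Surjective (proj (B := B) n l) ∧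
      Function.Exact (inj (B := B) n l) (proj (B := B) n l) ∧
      -- the inclusions commute with the differentials:
      (inj n (l - 1)).comp (BKd sk X l) = (FKd sk X s l).comp (inj n l) ∧
      -- the projections commute with the differentials (the differential of the
      -- shifted complex being that of `S[Θ;φ] ⊗ K_•(S; φ(x))`):
      (proj n (l - 1)).comp (FKd sk X s l) =
        (BKd sk (fun i => φ (X i)) (l - 1)).comp (proj n l) := by
  intro l
  exact ⟨inj_injective l, proj_surjective l, inj_proj_exact l,
    comm_inj sk X s l, comm_proj sk X s l⟩
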